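/- Let p be a prime, G a finitely generated group, and α ∈ Aut_p(G). Suppose there is a homomorphism ψ: G → K with K a finite p-group and g ∈ G such that ψ(g) is not conjugate to ψ(α(g)) in K. Then there is a homomorphism φ: Out_p(G) → L to a finite p-group L with φ(α̂) ≠ 1, where α̂ is the image of α in Out_p(G). -/

import Mathlib

variable (p : ℕ) (H : Type*) [Group H]

/-- The verbal subgroup `K_p = [H,H]Hᵖ` generated by all commutators and all `p`-th
powers; the quotient `H/K_p` is the first mod-`p` homology of `H`. -/
def Kp : Subgroup H := commutator H ⊔ Subgroup.closure {x : H | ∃ g : H, g ^ p = x}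

lemma Kp_map_le (α : MulAut H) : (Kp p H).map α.toMonoidHom ≤ Kp p H := by
  rw [Kp, Subgroup.map_sup]
  apply sup_le
  · refine le_trans (Subgroup.characteristic_iff_map_le.mp inferInstance α) le_sup_left
  · rw [MonoidHom.map_closure]
    refine le_trans (Subgroup.closure_mono ?_) le_sup_right
    rintro x ⟨y, ⟨g, hg⟩, rfl⟩
    exact ⟨α g, by rw [← map_pow]; exact congrArg _ hg⟩

/-- The subgroup `Aut_p(H) ≤ Aut(H)` of automorphisms acting trivially on
`H / [H,H]Hᵖ`. -/
def AutP : Subgroup (MulAut H) where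
  carrier := {α : MulAut H | ∀ h : H, h⁻¹ * α h ∈ Kp p H}
  one_mem' := by intro h; simpa using (Kp p H).one_mem
  mul_mem' := by
    intro α β hα hβ h
    have h1 : (h⁻¹ * α h) * (α (h⁻¹ * β h)) ∈ Kp p H := by
      refine mul_mem (hα h) (Kp_map_le p H α ⟨_, hβ h, rfl⟩)
    simpa [map_mul, mul_assoc] using h1
  inv_mem' := by
    intro α hα h
    have h1 := hα (α⁻¹ h)
    have h2 : ((α⁻¹ h)⁻¹ * h)⁻¹ ∈ Kp p H := by
      refine inv_mem ?_
      simpa using h1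
    simpa [mul_inv_rev] using h2


open Subgroup
open scoped commutatorElement

instance Kp_normal : (Kp p H).Normal := by
  constructor
  intro n hn g
  have := Kp_map_le p H (MulAut.conj g) ⟨n, hn, rfl⟩
  simpa [MulAut.conj_apply] using this

lemma finite_mulAut (Q : Type*) [Group Q] [Finite Q] : Finite (MulAut Q) :=
  Finite.of_injective (fun e => (e : Q → Q)) (fun a b h => by ext x; exact congrFun h x)

lemma Kp_hom_map_le {G H' : Type*} [Group G] [Group H'] (f : G →* H') :
    (Kp p G).map f ≤ Kp p H' := by
  rw [Kp, Kp, Subgroup.map_sup]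
  apply sup_le
  · rw [_root_.commutator, _root_.commutator, Subgroup.map_commutator]
    exact le_trans (Subgroup.commutator_mono le_top le_top) le_sup_left
  · rw [MonoidHom.map_closure]
    refine le_trans (Subgroup.closure_mono ?_) le_sup_right
    rintro x ⟨y, ⟨g, hg⟩, rfl⟩
    exact ⟨f g, by rw [← map_pow, hg]⟩

section Aux
variable {p}

lemma autP_no_prime (hp : p.Prime) {Q : Type*} [Group Q] [Finite Q] (hQ : IsPGroup p Q)
    {γ : MulAut Q} (hγ : γ ∈ AutP p Q) {q : ℕ} (hq : q.Prime) (hqp : q ≠ p)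
    (hord : orderOf γ = q) : False := by
  haveI : Fact q.Prime := ⟨hq⟩
  haveI : Fact p.Prime := ⟨hp⟩
  haveI : Finite (MulAut Q) := finite_mulAut Q
  set A := Subgroup.zpowers γ with hA
  have hAle : A ≤ AutP p Q := Subgroup.zpowers_le.mpr hγ
  have hAq : IsPGroup q A := IsPGroup.iff_card.mpr ⟨1, by rw [Nat.card_zpowers, hord, pow_one]⟩
  set K' := Kp p Q with hK'
  obtain ⟨t, ht⟩ := IsPGroup.iff_card.mp (hQ.to_subgroup K')
  -- every coset of K' contains a γ-fixed point
  have key : ∀ c : Q ⧸ K', ∃ x : Q, γ x = x ∧ (QuotientGroup.mk x : Q ⧸ K') = c := by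
    intro c
    letI X := {x : Q // (QuotientGroup.mk x : Q ⧸ K') = c}
    letI : MulAction A X :=
      { smul := fun a x => ⟨a.1 x.1, by
          exact (((QuotientGroup.eq).mpr (hAle a.2 x.1)).symm).trans x.2⟩
        one_smul := fun x => Subtype.ext rfl
        mul_smul := fun a b x => Subtype.ext rfl }
    have hcardX : Nat.card X = p ^ t := by
      obtain ⟨y, hy⟩ := QuotientGroup.mk_surjective c
      rw [← ht]
      apply Nat.card_congr
      refine ⟨fun x => ⟨y⁻¹ * x.1, (QuotientGroup.eq).mp (hy.trans x.2.symm)⟩,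
        fun k => ⟨y * k.1, by
          rw [← hy]
          exact ((QuotientGroup.eq).mpr (by simpa using k.2)).symm⟩,
        fun x => Subtype.ext (by simp), fun k => Subtype.ext (by simp)⟩
    have hmod := hAq.card_modEq_card_fixedPoints X
    have hne : Nat.card (MulAction.fixedPoints A X) ≠ 0 := by
      intro h0
      rw [hcardX, h0] at hmod
      have : q ∣ p ^ t := (Nat.modEq_zero_iff_dvd).mp hmod
      exact hqp ((Nat.prime_dvd_prime_iff_eq hq hp).mp (hq.dvd_of_dvd_pow this))
    have : Nonempty (MulAction.fixedPoints A X) := (Nat.card_ne_zero.mp hne).1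
    obtain ⟨⟨x, hx⟩⟩ := this
    refine ⟨x.1, ?_, x.2⟩
    have := hx (⟨γ, Subgroup.mem_zpowers γ⟩ : A)
    exact congrArg Subtype.val this
  -- the fixed subgroup
  let C : Subgroup Q :=
    { carrier := {x | γ x = x}
      one_mem' := map_one γ
      mul_mem' := fun {a b} ha hb => by simp only [Set.mem_setOf_eq, map_mul] at *; rw [ha, hb]
      inv_mem' := fun {a} ha => by simp only [Set.mem_setOf_eq, map_inv] at *; rw [ha] }
  have hCtop : C ⊔ K' = ⊤ := by
    rw [eq_top_iff]
    intro g _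
    obtain ⟨x, hx1, hx2⟩ := key (QuotientGroup.mk g)
    have hxg : x⁻¹ * g ∈ K' := (QuotientGroup.eq).mp hx2
    have : x * (x⁻¹ * g) ∈ C ⊔ K' :=
      mul_mem (Subgroup.mem_sup_left hx1) (Subgroup.mem_sup_right hxg)
    simpa using this
  have hC : C = ⊤ := by
    by_contra hC
    obtain ⟨M, hM, hCM⟩ := (eq_top_or_exists_le_coatom C).resolve_left hC
    haveI : Group.IsNilpotent Q := hQ.isNilpotent
    haveI hMnormal : M.Normal :=
      Subgroup.NormalizerCondition.normal_of_coatom M normalizerCondition_of_isNilpotent hM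
    -- every subgroup of Q/M is ⊥ or ⊤
    have hsub : ∀ S : Subgroup (Q ⧸ M), S = ⊥ ∨ S = ⊤ := by
      intro S
      have h1 : M ≤ S.comap (QuotientGroup.mk' M) := by
        intro m hm
        have h2 : (QuotientGroup.mk' M) m = 1 := (QuotientGroup.eq_one_iff m).mpr hm
        simp only [Subgroup.mem_comap, h2]
        exact S.one_mem
      have hs := Subgroup.map_comap_eq_self_of_surjective (QuotientGroup.mk'_surjective M) S
      rcases h1.lt_or_eq with hlt | heq
      · right
        rw [hM.2 _ hlt] at hs
        rw [← hs, ← MonoidHom.range_eq_map]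
        exact MonoidHom.range_eq_top_of_surjective _ (QuotientGroup.mk'_surjective M)
      · left
        rw [← heq] at hs
        rw [← hs]
        refine (Subgroup.map_eq_bot_iff _).mpr ?_
        intro m hm
        exact MonoidHom.mem_ker.mpr ((QuotientGroup.eq_one_iff m).mpr hm)
    -- Q/M has an element, hence a generator, of order p
    have hpg : IsPGroup p (Q ⧸ M) := hQ.to_quotient M
    obtain ⟨g0, hg0⟩ : ∃ g0 : Q ⧸ M, g0 ≠ 1 := by
      obtain ⟨g1, hg1⟩ := not_forall.mp ((not_iff_not.mpr (Subgroup.eq_top_iff' M)).mp hM.1)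
      exact ⟨QuotientGroup.mk g1, by simpa [QuotientGroup.eq_one_iff] using hg1⟩
    have hg0pos : orderOf g0 ≠ 0 := (orderOf_pos g0).ne'
    obtain ⟨k, hk⟩ := hpg g0
    obtain ⟨j, hjk, hj⟩ := (Nat.dvd_prime_pow hp).mp (orderOf_dvd_of_pow_eq_one hk)
    have hj0 : j ≠ 0 := by
      rintro rfl
      exact hg0 (orderOf_eq_one_iff.mp (by simpa using hj))
    have hpdvd : p ∣ orderOf g0 := hj ▸ dvd_pow_self p hj0
    set x := g0 ^ (orderOf g0 / p) with hxdef
    have hx : orderOf x = p := orderOf_pow_orderOf_div hg0pos hpdvd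
    have hxne : x ≠ 1 := by
      intro h1
      rw [h1, orderOf_one] at hx
      exact hp.one_lt.ne' hx.symm
    have hzx : Subgroup.zpowers x = ⊤ :=
      (hsub (Subgroup.zpowers x)).resolve_left (by simpa [Subgroup.zpowers_eq_bot] using hxne)
    have hcardQM : Nat.card (Q ⧸ M) = p := by
      rw [← Subgroup.card_top (G := Q ⧸ M), ← hzx, Nat.card_zpowers, hx]
    -- K' ≤ M
    have hK'M : K' ≤ M := by
      rw [hK', Kp]
      apply sup_le
      · rw [_root_.commutator_def, Subgroup.commutator_le]
        intro g1 _ g2 _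
        have hmapc : ((⁅g1, g2⁆ : Q) : Q ⧸ M) = ⁅(g1 : Q ⧸ M), (g2 : Q ⧸ M)⁆ :=
          map_commutatorElement (QuotientGroup.mk' M) g1 g2
        rw [← QuotientGroup.eq_one_iff, hmapc]
        have h1 : (g1 : Q ⧸ M) ∈ Subgroup.zpowers x := hzx ▸ Subgroup.mem_top _
        have h2 : (g2 : Q ⧸ M) ∈ Subgroup.zpowers x := hzx ▸ Subgroup.mem_top _
        obtain ⟨m1, hm1⟩ := Subgroup.mem_zpowers_iff.mp h1
        obtain ⟨m2, hm2⟩ := Subgroup.mem_zpowers_iff.mp h2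
        rw [← hm1, ← hm2]
        exact commutatorElement_eq_one_iff_commute.mpr ((Commute.refl x).zpow_zpow m1 m2)
      · rw [Subgroup.closure_le]
        rintro _ ⟨g1, rfl⟩
        rw [SetLike.mem_coe, ← QuotientGroup.eq_one_iff, QuotientGroup.mk_pow, ← hcardQM]
        exact pow_card_eq_one'
    have hle : (⊤ : Subgroup Q) ≤ M := hCtop ▸ sup_le hCM hK'M
    exact hM.1 (top_le_iff.mp hle)
  have : γ = 1 := by
    ext x
    have : x ∈ C := hC ▸ Subgroup.mem_top x
    exact this
  rw [this, orderOf_one] at hord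
  exact hq.one_lt.ne' hord.symm

lemma autP_isPGroup (hp : p.Prime) (Q : Type*) [Group Q] [Finite Q] (hQ : IsPGroup p Q) :
    IsPGroup p (AutP p Q) := by
  haveI : Finite (MulAut Q) := finite_mulAut Q
  intro β
  have hn0 : orderOf (β : MulAut Q) ≠ 0 := (orderOf_pos _).ne'
  have hall : ∀ {d : ℕ}, d.Prime → d ∣ orderOf (β : MulAut Q) → d = p := by
    intro d hd hdvd
    by_contra hdp
    exact autP_no_prime hp hQ
      (pow_mem β.2 (orderOf (β : MulAut Q) / d)) hd hdp
      (orderOf_pow_orderOf_div hn0 hdvd)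
  have hpk := Nat.eq_prime_pow_of_unique_prime_dvd hn0 hall
  refine ⟨(orderOf (β : MulAut Q)).primeFactorsList.length, ?_⟩
  have h1 : (β : MulAut Q) ^ p ^ (orderOf (β : MulAut Q)).primeFactorsList.length = 1 := by
    rw [← hpk]; exact pow_orderOf_eq_one _
  exact Subtype.ext (by push_cast; exact h1)

lemma shrink_pGroup {M : Type*} [Group M] [Finite M] (hM : IsPGroup p M) :
    ∃ (L : Type) (_ : Group L) (_ : Finite L) (f : M →* L),
      IsPGroup p L ∧ Function.Injective f := by
  obtain ⟨n, ⟨e⟩⟩ := Finite.exists_equiv_fin M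
  haveI : Small.{0} M := Small.mk' e
  haveI : Finite (Shrink.{0} M) := Finite.of_equiv M (equivShrink M)
  let e' : Shrink.{0} M ≃* M := Shrink.mulEquiv
  exact ⟨Shrink.{0} M, inferInstance, inferInstance, e'.symm.toMonoidHom,
    hM.of_injective e'.toMonoidHom e'.injective, e'.symm.injective⟩

end Aux

/-- The pro-`p` analogue of Grossman's criterion. Let `p` be a prime, `G` a finitely
generated group, and `α ∈ Aut_p(G)`. If there are a homomorphism `ψ : G → K` to a finite
`p`-group `K` and `g ∈ G` such that `ψ(g)` is not conjugate to `ψ(α(g))` in `K`, then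
there is a homomorphism `φ : Out_p(G) → L` to a finite `p`-group `L` with `φ(α̂) ≠ 1`,
i.e. a homomorphism `Aut_p(G) → L` killing all inner automorphisms and not killing
`α`. -/

theorem stmt18 {G : Type*} [Group G] (hp : p.Prime) (hfg : Group.FG G)
    (α : MulAut G) (hα : α ∈ AutP p G)
    (K : Type*) [Group K] [Finite K] (hK : IsPGroup p K) (ψ : G →* K) (g : G)
    (h : ¬ IsConj (ψ g) (ψ (α g))) :
    ∃ (L : Type) (_ : Group L) (_ : Finite L), IsPGroup p L ∧
      ∃ φ : AutP p G →* L,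
        (∀ (x : G) (hx : MulAut.conj x ∈ AutP p G), φ ⟨MulAut.conj x, hx⟩ = 1) ∧
        φ ⟨α, hα⟩ ≠ 1 := by
  classical
  haveI : Fact p.Prime := ⟨hp⟩
  -- there are finitely many homomorphisms G →* K
  haveI hfin : Finite (G →* K) := by
    obtain ⟨S, hSc, hSfin⟩ := Group.fg_iff.mp hfg
    haveI := hSfin.to_subtype
    exact Finite.of_injective (fun f => (fun s : S => f s))
      (fun f1 f2 hf => MonoidHom.eq_of_eqOn_dense hSc
        (fun x hx => congrFun hf ⟨x, hx⟩))
  -- the characteristic kernel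
  let Φ : G →* ((G →* K) → K) :=
    { toFun := fun x f => f x
      map_one' := by funext f; simp
      map_mul' := by intro a b; funext f; simp }
  set N := Φ.ker with hNdef
  have hNmem : ∀ x : G, x ∈ N ↔ ∀ f : G →* K, f x = 1 := by
    intro x
    rw [hNdef, MonoidHom.mem_ker]
    constructor
    · intro hx f; exact congrFun hx f
    · intro hx; funext f; exact hx f
  have hle : ∀ e : MulAut G, N.map e.toMonoidHom ≤ N := by
    rintro e _ ⟨x, hx, rfl⟩
    have hx' := (hNmem x).mp hx
    refine (hNmem _).mpr fun f => ?_
    exact hx' (f.comp e.toMonoidHom)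
  have hNchar : ∀ e : MulAut G, N.map e.toMonoidHom = N := by
    intro e
    refine le_antisymm (hle e) fun x hx => ?_
    refine Subgroup.mem_map.mpr ⟨e⁻¹ x, hle e⁻¹ (Subgroup.mem_map.mpr ⟨x, hx, rfl⟩), ?_⟩
    show e (e⁻¹ x) = x
    simp
  haveI : Finite (G ⧸ N) := Finite.of_injective _ (QuotientGroup.kerLift_injective Φ)
  have hQt : IsPGroup p (G ⧸ N) := by
    have hPi : IsPGroup p ((G →* K) → K) := by
      rw [IsPGroup.iff_card]
      obtain ⟨n, hn⟩ := IsPGroup.iff_card.mp hK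
      exact ⟨n * Nat.card (G →* K), by rw [Nat.card_fun, hn, ← pow_mul]⟩
    exact hPi.of_injective (QuotientGroup.kerLift Φ) (QuotientGroup.kerLift_injective Φ)
  haveI : Finite (MulAut (G ⧸ N)) := finite_mulAut _
  -- the induced map on automorphisms
  let Θ : MulAut G →* MulAut (G ⧸ N) :=
    MonoidHom.mk' (fun e => QuotientGroup.congr N N e (hNchar e)) (by
      intro a b
      apply MulEquiv.ext
      intro x
      induction x using QuotientGroup.induction_on with
      | H z => rfl)
  have hΘmk : ∀ (e : MulAut G) (z : G),
      Θ e (QuotientGroup.mk z) = QuotientGroup.mk (e z) := by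
    intro e z
    exact QuotientGroup.congr_mk N N e (hNchar e) z
  have hθmem : ∀ e : AutP p G, Θ e.1 ∈ AutP p (G ⧸ N) := by
    rintro ⟨e, he⟩
    intro x
    induction x using QuotientGroup.induction_on with
    | H z =>
      rw [hΘmk]
      have : QuotientGroup.mk (z⁻¹ * e z) ∈ Kp p (G ⧸ N) :=
        Kp_hom_map_le p (QuotientGroup.mk' N) ⟨z⁻¹ * e z, he z, rfl⟩
      simpa using this
  let θ' : AutP p G →* AutP p (G ⧸ N) :=
    (Θ.comp (AutP p G).subtype).codRestrict (AutP p (G ⧸ N)) hθmem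
  -- quotient by inner automorphisms
  let J : Subgroup (MulAut (G ⧸ N)) := (MulAut.conj : (G ⧸ N) →* MulAut (G ⧸ N)).range
  have hJnormal : J.Normal := by
    constructor
    rintro _ ⟨y, rfl⟩ β
    refine ⟨β y, ?_⟩
    ext x
    simp [MulAut.conj_apply, MulAut.mul_apply, mul_assoc]
  let I : Subgroup (AutP p (G ⧸ N)) := J.comap (AutP p (G ⧸ N)).subtype
  haveI : I.Normal := hJnormal.comap _
  obtain ⟨L, _, _, f, hL, hfinj⟩ :=
    shrink_pGroup (p := p) (M := AutP p (G ⧸ N) ⧸ I)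
      ((autP_isPGroup hp (G ⧸ N) hQt).to_quotient I)
  refine ⟨L, ‹_›, ‹_›, hL, f.comp ((QuotientGroup.mk' I).comp θ'), ?_, ?_⟩
  · -- inner automorphisms die
    intro x hx
    have hmem : θ' ⟨MulAut.conj x, hx⟩ ∈ I := by
      show Θ (MulAut.conj x) ∈ J
      refine ⟨QuotientGroup.mk x, ?_⟩
      apply MulEquiv.ext
      intro z
      induction z using QuotientGroup.induction_on with
      | H w =>
        rw [MulAut.conj_apply, hΘmk, MulAut.conj_apply]
        simp
    have h3 : (QuotientGroup.mk' I) (θ' ⟨MulAut.conj x, hx⟩) = 1 :=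
      (QuotientGroup.eq_one_iff _).mpr hmem
    have h4 := congrArg f h3
    rw [map_one] at h4
    exact h4
  · -- α survives
    intro hcon
    have h1 : (QuotientGroup.mk' I) (θ' ⟨α, hα⟩) = 1 := by
      apply hfinj
      simpa using hcon
    have hmem : θ' ⟨α, hα⟩ ∈ I := (QuotientGroup.eq_one_iff _).mp h1
    obtain ⟨ybar, hy⟩ := hmem
    obtain ⟨y, rfl⟩ := QuotientGroup.mk_surjective ybar
    have hyg : (MulAut.conj (QuotientGroup.mk y : G ⧸ N)) (QuotientGroup.mk g)
        = QuotientGroup.mk (α g) := by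
      rw [hy]
      show Θ α (QuotientGroup.mk g) = _
      exact hΘmk α g
    have : QuotientGroup.mk (y * g * y⁻¹) = (QuotientGroup.mk (α g) : G ⧸ N) := by
      rw [← hyg, MulAut.conj_apply]
      simp
    have hker : (y * g * y⁻¹)⁻¹ * α g ∈ N := (QuotientGroup.eq).mp this
    have hψ : ψ ((y * g * y⁻¹)⁻¹ * α g) = 1 := (hNmem _).mp hker ψ
    apply h
    rw [isConj_iff]
    refine ⟨ψ y, ?_⟩
    have := hψ
    rw [map_mul, map_inv] at this
    have h2 : ψ (α g) = ψ (y * g * y⁻¹) := (inv_mul_eq_one.mp this).symm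
    rw [h2]
    simp [map_mul]
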